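/- Let 0 < δ ≤ 0.0005 and suppose the pair of real polynomials (P_{−1}, P₀) has a (δ, 2)-regular ρ-germ at x₀ ∈ ℝ (for some renormalization factor ρ > 0). Then there exist real numbers y⁻_{−1} < y⁻₀ < x₀ < y⁺₀ < y⁺_{−1} such that for k ∈ {−1, 0}: P_k(y⁻_k) = P_k(y⁺_k) = 0, and P_k(x) > 0 for all x ∈ (y⁻_k, x₀] ∪ [x₀, y⁺_k). Moreover the interval length ratios satisfy (y⁺_{−1} − x₀)/(y⁺₀ − x₀) ≤ 2.1 and (x₀ − y⁻_{−1})/(x₀ − y⁻₀) ≤ 2.1. -/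

import Mathlib

open Polynomial

/-- The Thue–Morse iteration of a polynomial pair; `tmSeq Pm1 P0 (k+1)` is `P_k`,
so `tmSeq Pm1 P0 0 = P_{-1}` and `tmSeq Pm1 P0 1 = P₀`. -/
noncomputable def tmSeq (Pm1 P0 : Polynomial ℝ) : ℕ → Polynomial ℝ
  | 0 => Pm1
  | 1 => P0
  | (n + 2) => (tmSeq Pm1 P0 n) ^ 2 * (tmSeq Pm1 P0 (n + 1) - 2) + 2

/-- `tmDelta Pm1 P0 x₀ ρ (k+1) = Δ_k`, where
`Δ_k x = Q_k x - 2 cos x` and `Q_k x = P_k (x / (2 ^ k ρ) + x₀)`. -/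
noncomputable def tmDelta (Pm1 P0 : Polynomial ℝ) (x₀ ρ : ℝ) (j : ℕ) (x : ℝ) : ℝ :=
  (tmSeq Pm1 P0 j).eval (x / ((2 : ℝ) ^ ((j : ℤ) - 1) * ρ) + x₀) - 2 * Real.cos x

/-- `tmCoeff Pm1 P0 x₀ ρ (k+1) n = Δ_{k,n}`, the `n`-th Taylor coefficient of
`Δ_k` at `0`. -/
noncomputable def tmCoeff (Pm1 P0 : Polynomial ℝ) (x₀ ρ : ℝ) (j : ℕ) (n : ℕ) : ℝ :=
  iteratedDeriv n (tmDelta Pm1 P0 x₀ ρ j) 0 / (n.factorial : ℝ)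

/-- The pair `(Pm1, P0)` has a `ρ`-germ at `x₀`. -/
def HasGermAt (Pm1 P0 : Polynomial ℝ) (ρ x₀ : ℝ) : Prop :=
  0 < ρ ∧
  Pm1.eval x₀ = 2 ∧ (derivative Pm1).eval x₀ = 0 ∧
    (derivative (derivative Pm1)).eval x₀ = -ρ ^ 2 / 2 ∧
  P0.eval x₀ = 2 ∧ (derivative P0).eval x₀ = 0 ∧
    (derivative (derivative P0)).eval x₀ = -(2 * ρ ^ 2)

/-- The pair `(Pm1, P0)` has a `(δ, β)`-regular `ρ`-germ at `x₀`:
a `ρ`-germ together with the bounds `|Δ_{-1,n}| ≤ δ / β ^ n` and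
`|Δ_{0,n}| ≤ δ / β ^ n` for all `n ≥ 3`. -/
def IsRegularGermAt (Pm1 P0 : Polynomial ℝ) (δ β ρ x₀ : ℝ) : Prop :=
  HasGermAt Pm1 P0 ρ x₀ ∧
  ∀ n : ℕ, 3 ≤ n →
    |tmCoeff Pm1 P0 x₀ ρ 0 n| ≤ δ / β ^ n ∧ |tmCoeff Pm1 P0 x₀ ρ 1 n| ≤ δ / β ^ n

private lemma contDiff_polyeval (p : Polynomial ℝ) : ContDiff ℝ ⊤ fun x : ℝ => p.eval x := by
  induction p using Polynomial.induction_on' with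
  | add p q hp hq => simpa using hp.add hq
  | monomial n a =>
      simpa [Polynomial.eval_monomial] using (contDiff_const (c := a)).mul (contDiff_id.pow n)

private lemma iteratedDeriv_polyeval (p : Polynomial ℝ) (n : ℕ) :
    iteratedDeriv n (fun x : ℝ => p.eval x) = fun x => (derivative^[n] p).eval x := by
  induction n generalizing p with
  | zero => simp [iteratedDeriv_zero]
  | succ n ih =>
    rw [iteratedDeriv_succ']
    have h : deriv (fun x : ℝ => p.eval x) = fun x => (derivative p).eval x := by
      funext x; exact Polynomial.deriv (p := p)
    rw [h, ih]
    funext x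
    rw [Function.iterate_succ_apply]

private lemma iteratedDeriv_cos_eq (n : ℕ) :
    iteratedDeriv n Real.cos = fun x => Real.cos (x + n * (Real.pi / 2)) := by
  induction n with
  | zero => funext x; simp
  | succ n ih =>
    rw [iteratedDeriv_succ, ih]
    funext x
    have h : HasDerivAt (fun y : ℝ => Real.cos (y + n * (Real.pi / 2)))
        (-Real.sin (x + n * (Real.pi / 2))) x := by
      simpa [Function.comp_def] using (Real.hasDerivAt_cos (x + n * (Real.pi / 2))).comp x
        ((hasDerivAt_id x).add_const (n * (Real.pi / 2)))
    rw [h.deriv, ← Real.cos_add_pi_div_two]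
    congr 1
    push_cast
    ring

private lemma itcos_even (m : ℕ) : iteratedDeriv (2 * m) Real.cos 0 = (-1) ^ m := by
  rw [iteratedDeriv_cos_eq]
  show Real.cos ((0:ℝ) + (2 * m : ℕ) * (Real.pi / 2)) = (-1) ^ m
  have h : (0 : ℝ) + (2 * m : ℕ) * (Real.pi / 2) = m * Real.pi := by push_cast; ring
  rw [h]
  simpa using Real.cos_nat_mul_pi_sub 0 m

private lemma itcos_odd (m : ℕ) : iteratedDeriv (2 * m + 1) Real.cos 0 = 0 := by
  rw [iteratedDeriv_cos_eq]
  show Real.cos ((0:ℝ) + (2 * m + 1 : ℕ) * (Real.pi / 2)) = 0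
  have h : (0 : ℝ) + (2 * m + 1 : ℕ) * (Real.pi / 2) = m * Real.pi + Real.pi / 2 := by
    push_cast; ring
  rw [h, Real.cos_add_pi_div_two, Real.sin_nat_mul_pi, neg_zero]

private lemma poly_hasSum (q : Polynomial ℝ) (x : ℝ) :
    HasSum (fun n : ℕ => q.coeff n * x ^ n) (q.eval x) := by
  have hz : ∀ n ∉ Finset.range (q.natDegree + 1), q.coeff n * x ^ n = 0 := by
    intro n hn
    rw [Polynomial.coeff_eq_zero_of_natDegree_lt (by simpa using Finset.mem_range.not.mp hn)]
    simp
  have h : HasSum (fun n : ℕ => q.coeff n * x ^ n)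
      (∑ n ∈ Finset.range (q.natDegree + 1), q.coeff n * x ^ n) := hasSum_sum_of_ne_finset_zero hz
  rwa [← Polynomial.eval_eq_sum_range] at h

private lemma hasSum_cos_taylor (x : ℝ) :
    HasSum (fun n : ℕ => iteratedDeriv n Real.cos 0 / (n.factorial : ℝ) * x ^ n) (Real.cos x) := by
  have hinj : Function.Injective (fun m : ℕ => 2 * m) := fun a b h => by dsimp at h; omega
  have hv : ∀ n ∉ Set.range (fun m : ℕ => 2 * m),
      iteratedDeriv n Real.cos 0 / (n.factorial : ℝ) * x ^ n = 0 := by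
    intro n hn
    rcases Nat.even_or_odd n with ⟨k, hk⟩ | ⟨k, hk⟩
    · exact absurd ⟨k, show 2 * k = n by omega⟩ hn
    · rw [hk, itcos_odd]; simp
  rw [← Function.Injective.hasSum_iff hinj hv]
  have e : ((fun n : ℕ => iteratedDeriv n Real.cos 0 / (n.factorial : ℝ) * x ^ n) ∘ fun m => 2 * m)
      = fun m : ℕ => (-1) ^ m * x ^ (2 * m) / ((2 * m).factorial : ℝ) := by
    funext m
    simp only [Function.comp]
    rw [itcos_even]
    ring
  rw [e]
  exact Real.hasSum_cos x

private lemma comp_eval (P : Polynomial ℝ) (s x₀ : ℝ) (hs : s ≠ 0) (y : ℝ) :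
    (P.comp (C s⁻¹ * X + C x₀)).eval y = P.eval (y / s + x₀) := by
  rw [Polynomial.eval_comp]
  simp [div_eq_inv_mul]

private lemma itDeriv_delta (P : Polynomial ℝ) (s x₀ : ℝ) (n : ℕ) :
    iteratedDeriv n (fun y : ℝ => (P.comp (C s⁻¹ * X + C x₀)).eval y - 2 * Real.cos y) 0
      = (n.factorial : ℝ) * (P.comp (C s⁻¹ * X + C x₀)).coeff n
        - 2 * iteratedDeriv n Real.cos 0 := by
  set q := P.comp (C s⁻¹ * X + C x₀) with hqdef
  have hf : ContDiffOn ℝ n (fun y : ℝ => q.eval y) Set.univ :=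
    ((contDiff_polyeval q).of_le le_top).contDiffOn
  have hg : ContDiffOn ℝ n (fun y : ℝ => 2 * Real.cos y) Set.univ :=
    ((contDiff_const.mul Real.contDiff_cos).of_le le_top).contDiffOn
  have hgc : ContDiffOn ℝ n Real.cos Set.univ :=
    (Real.contDiff_cos.of_le le_top).contDiffOn
  have h1 : iteratedDeriv n ((fun y : ℝ => q.eval y) - fun y : ℝ => 2 * Real.cos y) 0
      = iteratedDeriv n (fun y : ℝ => q.eval y) 0
        - iteratedDeriv n (fun y : ℝ => 2 * Real.cos y) 0 := by
    rw [← iteratedDerivWithin_univ, ← iteratedDerivWithin_univ, ← iteratedDerivWithin_univ]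
    exact iteratedDerivWithin_sub (Set.mem_univ 0) uniqueDiffOn_univ (hf.contDiffWithinAt (Set.mem_univ 0))
      (hg.contDiffWithinAt (Set.mem_univ 0))
  have h2 : iteratedDeriv n (fun y : ℝ => 2 * Real.cos y) 0
      = 2 * iteratedDeriv n Real.cos 0 := by
    rw [← iteratedDerivWithin_univ, ← iteratedDerivWithin_univ]
    exact iteratedDerivWithin_const_mul (Set.mem_univ 0) uniqueDiffOn_univ 2 (hgc.contDiffWithinAt (Set.mem_univ 0))
  have h3 : iteratedDeriv n (fun y : ℝ => q.eval y) 0 = (n.factorial : ℝ) * q.coeff n := by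
    rw [iteratedDeriv_polyeval]
    show ((⇑derivative)^[n] q).eval 0 = _
    rw [← Polynomial.coeff_zero_eq_eval_zero, Polynomial.coeff_iterate_derivative]
    simp [Nat.descFactorial_self, nsmul_eq_mul]
  have hfun : (fun y : ℝ => q.eval y - 2 * Real.cos y)
      = ((fun y : ℝ => q.eval y) - fun y : ℝ => 2 * Real.cos y) := rfl
  rw [hfun, h1, h2, h3]

private lemma hasSum_delta (P : Polynomial ℝ) (s x₀ : ℝ) (hs : s ≠ 0) (x : ℝ) :
    HasSum (fun n : ℕ =>
        iteratedDeriv n (fun y : ℝ => P.eval (y / s + x₀) - 2 * Real.cos y) 0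
          / (n.factorial : ℝ) * x ^ n)
      (P.eval (x / s + x₀) - 2 * Real.cos x) := by
  set q := P.comp (C s⁻¹ * X + C x₀) with hqdef
  have hfe : (fun y : ℝ => P.eval (y / s + x₀) - 2 * Real.cos y)
      = fun y : ℝ => q.eval y - 2 * Real.cos y := by
    funext y; rw [comp_eval P s x₀ hs y]
  rw [hfe]
  have hmain := (poly_hasSum q x).sub ((hasSum_cos_taylor x).mul_left 2)
  have e : (fun n : ℕ => q.coeff n * x ^ n
      - 2 * (iteratedDeriv n Real.cos 0 / (n.factorial : ℝ) * x ^ n))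
      = fun n : ℕ => iteratedDeriv n (fun y : ℝ => q.eval y - 2 * Real.cos y) 0
          / (n.factorial : ℝ) * x ^ n := by
    funext n
    rw [itDeriv_delta P s x₀ n]
    have hne : ((n.factorial : ℝ)) ≠ 0 := Nat.cast_ne_zero.mpr n.factorial_ne_zero
    rw [← hqdef]
    field_simp
  rw [e] at hmain
  have hx : q.eval x = P.eval (x / s + x₀) := comp_eval P s x₀ hs x
  rwa [hx] at hmain

private lemma low_coeff (P : Polynomial ℝ) (s x₀ : ℝ) (hs : s ≠ 0)
    (h0 : P.eval x₀ = 2) (h1 : (derivative P).eval x₀ = 0)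
    (h2 : (derivative (derivative P)).eval x₀ = -(2 * s ^ 2)) :
    ∀ n : ℕ, n ≤ 2 →
      iteratedDeriv n (fun y : ℝ => P.eval (y / s + x₀) - 2 * Real.cos y) 0 = 0 := by
  set A : Polynomial ℝ := C s⁻¹ * X + C x₀ with hA
  set q := P.comp A with hqdef
  have hfe : (fun y : ℝ => P.eval (y / s + x₀) - 2 * Real.cos y)
      = fun y : ℝ => q.eval y - 2 * Real.cos y := by
    funext y; rw [comp_eval P s x₀ hs y]
  have hAd : derivative A = C s⁻¹ := by simp [hA]
  have hAe : A.eval 0 = x₀ := by simp [hA]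
  have hq' : derivative q = C s⁻¹ * (derivative P).comp A := by
    rw [hqdef, Polynomial.derivative_comp, hAd]
  have hq'' : derivative (derivative q) = C s⁻¹ * (C s⁻¹ * (derivative (derivative P)).comp A) := by
    rw [hq', Polynomial.derivative_C_mul, Polynomial.derivative_comp, hAd]
  -- coefficients of q
  have hc0 : q.coeff 0 = 2 := by
    rw [Polynomial.coeff_zero_eq_eval_zero, hqdef, Polynomial.eval_comp, hAe, h0]
  have hc1 : q.coeff 1 = 0 := by
    have := Polynomial.coeff_derivative q 0
    have he : (derivative q).coeff 0 = 0 := by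
      rw [Polynomial.coeff_zero_eq_eval_zero, hq']
      simp [Polynomial.eval_comp, hAe, h1]
    rw [he] at this
    simpa using this.symm
  have hc2 : q.coeff 2 = -1 := by
    have e1 := Polynomial.coeff_derivative (derivative q) 0
    have e2 := Polynomial.coeff_derivative q 1
    have he : (derivative (derivative q)).coeff 0 = -2 := by
      rw [Polynomial.coeff_zero_eq_eval_zero, hq'']
      have : (derivative (derivative P)).eval (A.eval 0) = -(2 * s ^ 2) := by rw [hAe, h2]
      rw [Polynomial.eval_mul, Polynomial.eval_C, Polynomial.eval_mul, Polynomial.eval_C,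
        Polynomial.eval_comp, hAe, h2]
      rw [show s⁻¹ * (s⁻¹ * -(2 * s ^ 2)) = -2 * (s * s⁻¹) ^ 2 by ring, mul_inv_cancel₀ hs]
      norm_num
    rw [he, e2] at e1
    push_cast at e1
    linarith
  intro n hn
  rw [hfe]
  have hit := itDeriv_delta P s x₀ n
  rw [← hqdef] at hit
  interval_cases n
  · rw [hit, hc0, iteratedDeriv_cos_eq]
    show (0:ℕ).factorial * (2:ℝ) - 2 * Real.cos ((0:ℝ) + (0:ℕ) * (Real.pi/2)) = 0
    norm_num
  · rw [hit, hc1, iteratedDeriv_cos_eq]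
    show (1:ℕ).factorial * (0:ℝ) - 2 * Real.cos ((0:ℝ) + (1:ℕ) * (Real.pi/2)) = 0
    norm_num [Real.cos_pi_div_two]
  · rw [hit, hc2, iteratedDeriv_cos_eq]
    show (2:ℕ).factorial * (-1:ℝ) - 2 * Real.cos ((0:ℝ) + (2:ℕ) * (Real.pi/2)) = 0
    have hp : ((2:ℕ):ℝ) * (Real.pi/2) = Real.pi := by push_cast; ring
    rw [zero_add, hp, Real.cos_pi]
    norm_num

private lemma two_cos_156 : (0.0214 : ℝ) < 2 * Real.cos 1.56 := by
  have hπl := Real.pi_gt_d6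
  have hπu := Real.pi_lt_d6
  set t : ℝ := Real.pi / 2 - 1.56 with ht
  have ht1 : (0.010796 : ℝ) < t := by rw [ht]; norm_num at hπl ⊢; linarith
  have ht2 : t ≤ 1 := by rw [ht]; norm_num at hπu ⊢; linarith
  have ht0 : (0:ℝ) < t := lt_trans (by norm_num) ht1
  have hs := Real.sin_gt_sub_cube ht0
  have hcos : Real.cos 1.56 = Real.sin t := by
    rw [ht, Real.sin_pi_div_two_sub]
  have htu : t ≤ 0.011 := by rw [ht]; norm_num at hπu ⊢; linarith
  have ht3 : t ^ 3 ≤ (0.011 : ℝ) ^ 3 := by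
    apply pow_le_pow_left₀ ht0.le htu
  rw [hcos]
  nlinarith [hs]

private lemma two_cos_158 : 2 * Real.cos 1.58 < -0.018 := by
  have hπl := Real.pi_gt_d6
  have hπu := Real.pi_lt_d6
  set t : ℝ := 1.58 - Real.pi / 2 with ht
  have ht1 : (0.0092035 : ℝ) < t := by rw [ht]; norm_num at hπu ⊢; linarith
  have ht2 : t ≤ 1 := by rw [ht]; norm_num at hπl ⊢; linarith
  have ht0 : (0:ℝ) < t := lt_trans (by norm_num) ht1
  have hs := Real.sin_gt_sub_cube ht0
  have hcos : Real.cos 1.58 = -Real.sin t := by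
    rw [show (1.58 : ℝ) = t + Real.pi / 2 by rw [ht]; ring, Real.cos_add_pi_div_two]
  have htu : t ≤ 0.0093 := by rw [ht]; norm_num at hπl ⊢; linarith
  have ht3 : t ^ 3 ≤ (0.0093 : ℝ) ^ 3 := by
    apply pow_le_pow_left₀ ht0.le htu
  rw [hcos]
  nlinarith [hs]

private lemma exists_first_zero (Q : ℝ → ℝ) (hc : Continuous Q)
    (hpos : ∀ x : ℝ, 0 ≤ x → x ≤ 1.56 → 0 < Q x) (hneg : Q 1.58 < 0) :
    ∃ z : ℝ, 1.56 < z ∧ z ≤ 1.58 ∧ Q z = 0 ∧ ∀ x : ℝ, 0 ≤ x → x < z → 0 < Q x := by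
  set S : Set ℝ := Set.Icc (0 : ℝ) 1.58 ∩ {x | Q x ≤ 0} with hS
  have hSc : IsClosed S := isClosed_Icc.inter (isClosed_le hc continuous_const)
  have hne : S.Nonempty := ⟨1.58, ⟨by norm_num, le_refl _⟩, hneg.le⟩
  have hbdd : BddBelow S := ⟨0, fun x hx => hx.1.1⟩
  set z := sInf S with hz
  have hzS : z ∈ S := hSc.csInf_mem hne hbdd
  have hz0 : 0 ≤ z := hzS.1.1
  have hz158 : z ≤ 1.58 := hzS.1.2
  have hzQ : Q z ≤ 0 := hzS.2
  have hz156 : 1.56 < z := by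
    by_contra h
    push_neg at h
    exact absurd hzQ (not_le.mpr (hpos z hz0 h))
  have hless : ∀ x : ℝ, 0 ≤ x → x < z → 0 < Q x := by
    intro x hx0 hxz
    by_contra h
    push_neg at h
    have hxS : x ∈ S := ⟨⟨hx0, le_trans hxz.le hz158⟩, h⟩
    exact absurd (csInf_le hbdd hxS) (not_le.mpr hxz)
  have hzpos : 0 ≤ Q z := by
    have htend : Filter.Tendsto Q (nhdsWithin z (Set.Iio z)) (nhds (Q z)) :=
      (hc.continuousAt).continuousWithinAt.tendsto
    refine ge_of_tendsto htend ?_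
    have hmem : Set.Ioo (0 : ℝ) z ∈ nhdsWithin z (Set.Iio z) :=
      Ioo_mem_nhdsLT_of_mem ⟨by linarith, le_refl _⟩
    filter_upwards [hmem] with x hx
    exact (hless x hx.1.le hx.2).le
  exact ⟨z, hz156, hz158, le_antisymm hzQ hzpos, hless⟩

private lemma main_side (P : Polynomial ℝ) (s x₀ δ : ℝ) (hs : 0 < s) (hδ0 : 0 < δ)
    (hδ : δ ≤ 0.0005)
    (h0 : P.eval x₀ = 2) (h1 : (derivative P).eval x₀ = 0)
    (h2 : (derivative (derivative P)).eval x₀ = -(2 * s ^ 2))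
    (hb : ∀ n : ℕ, 3 ≤ n →
      |iteratedDeriv n (fun y : ℝ => P.eval (y / s + x₀) - 2 * Real.cos y) 0
        / (n.factorial : ℝ)| ≤ δ / 2 ^ n) :
    ∃ zm zp : ℝ, (-1.58 : ℝ) ≤ zm ∧ zm < -1.56 ∧ (1.56 : ℝ) < zp ∧ zp ≤ 1.58 ∧
      P.eval (zm / s + x₀) = 0 ∧ P.eval (zp / s + x₀) = 0 ∧
      ∀ u : ℝ, zm < u → u < zp → 0 < P.eval (u / s + x₀) := by
  set d : ℕ → ℝ := fun n =>
    iteratedDeriv n (fun y : ℝ => P.eval (y / s + x₀) - 2 * Real.cos y) 0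
      / (n.factorial : ℝ) with hd
  set Q : ℝ → ℝ := fun u => P.eval (u / s + x₀) with hQ
  -- uniform bound on the deviation
  have habs : ∀ x : ℝ, |x| ≤ 1.58 → |Q x - 2 * Real.cos x| ≤ 0.0024 := by
    intro x hx
    have hsum := hasSum_delta P s x₀ (ne_of_gt hs) x
    have hgeo : HasSum (fun n : ℕ => δ * (0.79 : ℝ) ^ n) (δ * (1 - 0.79)⁻¹) :=
      (hasSum_geometric_of_lt_one (by norm_num) (by norm_num)).mul_left δ
    have hterm : ∀ n : ℕ, |d n * x ^ n| ≤ δ * (0.79 : ℝ) ^ n := by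
      intro n
      rcases lt_or_ge n 3 with h3 | h3
      · have hdz : d n = 0 := by
          have := low_coeff P s x₀ (ne_of_gt hs) h0 h1 h2 n (by omega)
          rw [hd]
          simp [this]
        rw [hdz]
        simp
        positivity
      · have e1 : |d n * x ^ n| = |d n| * |x| ^ n := by
          rw [abs_mul, abs_pow]
        have e2 : |d n| ≤ δ / 2 ^ n := hb n h3
        have e3 : |x| ^ n ≤ (1.58 : ℝ) ^ n := pow_le_pow_left₀ (abs_nonneg x) hx n
        have e4 : |d n| * |x| ^ n ≤ (δ / 2 ^ n) * (1.58 : ℝ) ^ n := by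
          apply mul_le_mul e2 e3 (by positivity) (by positivity)
        have e5 : (δ / 2 ^ n) * (1.58 : ℝ) ^ n = δ * (0.79 : ℝ) ^ n := by
          rw [show (0.79 : ℝ) = 1.58 / 2 by norm_num, div_pow]
          ring
        rw [e1]
        rw [e5] at e4
        exact e4
    have hup : Q x - 2 * Real.cos x ≤ δ * (1 - 0.79)⁻¹ :=
      hasSum_le (fun n => (le_abs_self _).trans (hterm n)) hsum hgeo
    have hlo : -(Q x - 2 * Real.cos x) ≤ δ * (1 - 0.79)⁻¹ :=
      hasSum_le (fun n => (neg_le_abs _).trans (hterm n)) hsum.neg hgeo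
    have hval : δ * (1 - 0.79 : ℝ)⁻¹ ≤ 0.0024 := by
      rw [show ((1:ℝ) - 0.79)⁻¹ = (0.21 : ℝ)⁻¹ by norm_num]
      nlinarith
    rw [abs_le]
    constructor <;> linarith
  have hcont : Continuous Q := by
    apply P.continuous_aeval.comp ((continuous_id.div_const s).add continuous_const) |>.congr
    intro x
    rfl
  -- positivity on [0, 1.56] (for ± x)
  have hposin : ∀ x : ℝ, |x| ≤ 1.56 → 0 < Q x := by
    intro x hx
    have h1 : |Q x - 2 * Real.cos x| ≤ 0.0024 := habs x (by linarith [le_refl x]; )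
    have hcx : Real.cos 1.56 ≤ Real.cos x := by
      have hπ : (1.56 : ℝ) ≤ Real.pi := by
        have := Real.pi_gt_d6; norm_num at this ⊢; linarith
      have h := Real.cos_le_cos_of_nonneg_of_le_pi (abs_nonneg x) hπ hx
      rwa [Real.cos_abs] at h
    have := two_cos_156
    have hle := abs_le.mp h1
    linarith [hle.1]
  have hneg158 : ∀ x : ℝ, |x| = 1.58 → Q x < 0 := by
    intro x hx
    have h1 := abs_le.mp (habs x (le_of_eq hx))
    have hcx : Real.cos x = Real.cos 1.58 := by
      rw [← Real.cos_abs, hx]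
    have := two_cos_158
    linarith [h1.2]
  -- positive side
  obtain ⟨zp, hzp1, hzp2, hzp0, hzppos⟩ := exists_first_zero Q hcont
    (fun x hx0 hx1 => hposin x (by rw [abs_of_nonneg hx0]; exact hx1))
    (hneg158 1.58 (by norm_num))
  -- negative side
  obtain ⟨zn, hzn1, hzn2, hzn0, hznpos⟩ := exists_first_zero (fun u => Q (-u))
    (hcont.comp continuous_neg)
    (fun x hx0 hx1 => hposin (-x) (by rw [abs_neg, abs_of_nonneg hx0]; exact hx1))
    (hneg158 (-1.58) (by norm_num))
  refine ⟨-zn, zp, by linarith, by linarith, hzp1, hzp2, ?_, hzp0, ?_⟩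
  · show P.eval (-zn / s + x₀) = 0
    have : Q (-zn) = 0 := by simpa using hzn0
    exact this
  · intro u hu1 hu2
    rcases le_or_gt 0 u with hu0 | hu0
    · exact hzppos u hu0 hu2
    · have : 0 < Q (-(-u)) := hznpos (-u) (by linarith) (by linarith)
      simpa using this

/-- zeros of `P_{-1}` and `P₀` surrounding the base point of a
`(δ, 2)`-regular germ, positivity in between, and interval length ratios. -/
theorem regular_germ_zero_ratios (δ : ℝ) (hδ0 : 0 < δ) (hδ : δ ≤ 0.0005)
    (Pm1 P0 : Polynomial ℝ) (x₀ ρ : ℝ)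
    (hreg : IsRegularGermAt Pm1 P0 δ 2 ρ x₀) :
    ∃ ym1 ym0 yp0 yp1 : ℝ,
      ym1 < ym0 ∧ ym0 < x₀ ∧ x₀ < yp0 ∧ yp0 < yp1 ∧
      Pm1.eval ym1 = 0 ∧ Pm1.eval yp1 = 0 ∧
      P0.eval ym0 = 0 ∧ P0.eval yp0 = 0 ∧
      (∀ x, x ∈ Set.Ioc ym1 x₀ ∪ Set.Ico x₀ yp1 → 0 < Pm1.eval x) ∧
      (∀ x, x ∈ Set.Ioc ym0 x₀ ∪ Set.Ico x₀ yp0 → 0 < P0.eval x) ∧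
      (yp1 - x₀) / (yp0 - x₀) ≤ 2.1 ∧
      (x₀ - ym1) / (x₀ - ym0) ≤ 2.1 := by
  obtain ⟨⟨hρ, e0, e1, e2, f0, f1, f2⟩, hco⟩ := hreg
  have hρ2 : (0 : ℝ) < ρ / 2 := by linarith
  -- the two scales
  have hdel0 : tmDelta Pm1 P0 x₀ ρ 0
      = fun y : ℝ => Pm1.eval (y / (ρ / 2) + x₀) - 2 * Real.cos y := by
    funext y
    show (tmSeq Pm1 P0 0).eval (y / ((2 : ℝ) ^ (((0 : ℕ) : ℤ) - 1) * ρ) + x₀) - 2 * Real.cos y = _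
    have h2p : ((2 : ℝ) ^ (((0 : ℕ) : ℤ) - 1) * ρ) = ρ / 2 := by
      norm_num
      ring
    rw [h2p]
    rfl
  have hdel1 : tmDelta Pm1 P0 x₀ ρ 1
      = fun y : ℝ => P0.eval (y / ρ + x₀) - 2 * Real.cos y := by
    funext y
    show (tmSeq Pm1 P0 1).eval (y / ((2 : ℝ) ^ (((1 : ℕ) : ℤ) - 1) * ρ) + x₀) - 2 * Real.cos y = _
    have h2p : ((2 : ℝ) ^ (((1 : ℕ) : ℤ) - 1) * ρ) = ρ := by
      norm_num
    rw [h2p]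
    rfl
  -- apply main_side to Pm1 with s = ρ/2
  obtain ⟨am, ap, ham1, ham2, hap1, hap2, hamz, hapz, hapos⟩ :=
    main_side Pm1 (ρ / 2) x₀ δ hρ2 hδ0 hδ e0 e1
      (by rw [e2]; try ring)
      (by
        intro n hn
        have h := (hco n hn).1
        rw [tmCoeff, hdel0] at h
        exact h)
  -- apply main_side to P0 with s = ρ
  obtain ⟨bm, bp, hbm1, hbm2, hbp1, hbp2, hbmz, hbpz, hbpos⟩ :=
    main_side P0 ρ x₀ δ hρ hδ0 hδ f0 f1
      (by rw [f2])
      (by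
        intro n hn
        have h := (hco n hn).2
        rw [tmCoeff, hdel1] at h
        exact h)
  refine ⟨am / (ρ / 2) + x₀, bm / ρ + x₀, bp / ρ + x₀, ap / (ρ / 2) + x₀,
    ?_, ?_, ?_, ?_, hamz, hapz, hbmz, hbpz, ?_, ?_, ?_, ?_⟩
  · have h1 : am / (ρ / 2) = 2 * am / ρ := by field_simp
    have h2 : 2 * am / ρ < bm / ρ := by
      apply div_lt_div_of_pos_right ?_ hρ
      linarith
    linarith [h1, h2]
  · have : bm / ρ < 0 := div_neg_of_neg_of_pos (by linarith) hρ
    linarith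
  · have : 0 < bp / ρ := div_pos (by linarith) hρ
    linarith
  · have h1 : ap / (ρ / 2) = 2 * ap / ρ := by field_simp
    have h2 : bp / ρ < 2 * ap / ρ := by
      apply div_lt_div_of_pos_right ?_ hρ
      linarith
    linarith [h1, h2]
  · intro x hx
    rcases hx with ⟨hx1, hx2⟩ | ⟨hx1, hx2⟩
    · have h1 : am < (ρ / 2) * (x - x₀) := by
        have h' : am / (ρ / 2) < x - x₀ := by linarith
        calc am = am / (ρ / 2) * (ρ / 2) := by field_simp
          _ < (x - x₀) * (ρ / 2) := mul_lt_mul_of_pos_right h' hρ2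
          _ = (ρ / 2) * (x - x₀) := by ring
      have h2 : (ρ / 2) * (x - x₀) < ap := by
        have : (ρ / 2) * (x - x₀) ≤ 0 :=
          mul_nonpos_of_nonneg_of_nonpos hρ2.le (by linarith)
        linarith
      have h3 := hapos _ h1 h2
      rwa [mul_div_cancel_left₀ _ (ne_of_gt hρ2), sub_add_cancel] at h3
    · have h1 : am < (ρ / 2) * (x - x₀) := by
        have : 0 ≤ (ρ / 2) * (x - x₀) := mul_nonneg hρ2.le (by linarith)
        linarith
      have h2 : (ρ / 2) * (x - x₀) < ap := by
        have h' : x - x₀ < ap / (ρ / 2) := by linarith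
        calc (ρ / 2) * (x - x₀) = (x - x₀) * (ρ / 2) := by ring
          _ < ap / (ρ / 2) * (ρ / 2) := mul_lt_mul_of_pos_right h' hρ2
          _ = ap := by field_simp
      have h3 := hapos _ h1 h2
      rwa [mul_div_cancel_left₀ _ (ne_of_gt hρ2), sub_add_cancel] at h3
  · intro x hx
    rcases hx with ⟨hx1, hx2⟩ | ⟨hx1, hx2⟩
    · have h1 : bm < ρ * (x - x₀) := by
        have h' : bm / ρ < x - x₀ := by linarith
        calc bm = bm / ρ * ρ := by field_simp
          _ < (x - x₀) * ρ := mul_lt_mul_of_pos_right h' hρ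
          _ = ρ * (x - x₀) := by ring
      have h2 : ρ * (x - x₀) < bp := by
        have : ρ * (x - x₀) ≤ 0 :=
          mul_nonpos_of_nonneg_of_nonpos hρ.le (by linarith)
        linarith
      have h3 := hbpos _ h1 h2
      rwa [mul_div_cancel_left₀ _ (ne_of_gt hρ), sub_add_cancel] at h3
    · have h1 : bm < ρ * (x - x₀) := by
        have : 0 ≤ ρ * (x - x₀) := mul_nonneg hρ.le (by linarith)
        linarith
      have h2 : ρ * (x - x₀) < bp := by
        have h' : x - x₀ < bp / ρ := by linarith
        calc ρ * (x - x₀) = (x - x₀) * ρ := by ring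
          _ < bp / ρ * ρ := mul_lt_mul_of_pos_right h' hρ
          _ = bp := by field_simp
      have h3 := hbpos _ h1 h2
      rwa [mul_div_cancel_left₀ _ (ne_of_gt hρ), sub_add_cancel] at h3
  · have hs1 : ap / (ρ / 2) + x₀ - x₀ = 2 * ap / ρ := by
      rw [add_sub_cancel_right, div_eq_div_iff (by linarith : (0:ℝ) < ρ/2).ne' hρ.ne']
      ring
    have hs0 : bp / ρ + x₀ - x₀ = bp / ρ := by ring
    rw [hs1, hs0]
    have hden : 0 < bp / ρ := div_pos (by linarith) hρ
    rw [div_le_iff₀ hden]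
    have he : (2.1 : ℝ) * (bp / ρ) = 2.1 * bp / ρ := by ring
    rw [he, div_le_div_iff₀ hρ hρ]
    exact mul_le_mul_of_nonneg_right (by linarith) hρ.le
  · have hs1 : x₀ - (am / (ρ / 2) + x₀) = -2 * am / ρ := by
      have h : x₀ - (am / (ρ / 2) + x₀) = (-am) / (ρ / 2) := by ring
      rw [h, div_eq_div_iff (by linarith : (0:ℝ) < ρ/2).ne' hρ.ne']
      ring
    have hs0 : x₀ - (bm / ρ + x₀) = -bm / ρ := by ring
    rw [hs1, hs0]
    have hden : 0 < -bm / ρ := div_pos (by linarith) hρ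
    rw [div_le_iff₀ hden]
    have he : (2.1 : ℝ) * (-bm / ρ) = 2.1 * -bm / ρ := by ring
    rw [he, div_le_div_iff₀ hρ hρ]
    exact mul_le_mul_of_nonneg_right (by linarith) hρ.le
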